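/- Let K ≥ 1 and define a : ℕ → ℚ by a(m)=1 for 1 ≤ m ≤ 2K+1 and a(n) = (a(n-1)·a(n-2K) + a(n-K) + a(n-K-1)) / a(n-(2K+1)) for n ≥ 2K+2. Then a(n) is a positive integer for every n ≥ 1 (in particular all denominators a(n-(2K+1)) are nonzero). -/

import Mathlib

set_option maxHeartbeats 1000000 in
theorem stmt5 (K : ℕ) (hK : 1 ≤ K) (a : ℕ → ℚ)
    (hinit : ∀ m, 1 ≤ m → m ≤ 2*K+1 → a m = 1)
    (hrec : ∀ n, 2*K+2 ≤ n →
      a n = (a (n-1) * a (n-2*K) + a (n-K) + a (n-K-1)) / a (n-(2*K+1))) :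
    ∀ n, 1 ≤ n → ∃ m : ℤ, 0 < m ∧ a n = (m : ℚ) := by
  -- positivity
  have pos : ∀ n, 1 ≤ n → 0 < a n := by
    intro n
    induction n using Nat.strong_induction_on with
    | _ n ih =>
      intro hn
      by_cases hn2 : n ≤ 2*K+1
      · rw [hinit n hn hn2]; norm_num
      · have h2 : 2*K+2 ≤ n := by omega
        rw [hrec n h2]
        have p1 := ih (n-1) (by omega) (by omega)
        have p2 := ih (n-2*K) (by omega) (by omega)
        have p3 := ih (n-K) (by omega) (by omega)
        have p4 := ih (n-K-1) (by omega) (by omega)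
        have p5 := ih (n-(2*K+1)) (by omega) (by omega)
        exact div_pos (add_pos (add_pos (mul_pos p1 p2) p3) p4) p5
  -- multiplicative form of the recurrence
  have hr : ∀ q, 1 ≤ q → a q * a (q+2*K+1) = a (q+1) * a (q+2*K) + a (q+K) + a (q+K+1) := by
    intro q hq
    have h := hrec (q+2*K+1) (by omega)
    rw [show q+2*K+1-1 = q+2*K from by omega, show q+2*K+1-2*K = q+1 from by omega,
        show q+2*K+1-K-1 = q+K from by omega, show q+2*K+1-K = q+K+1 from by omega,
        show q+2*K+1-(2*K+1) = q from by omega] at h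
    rw [eq_div_iff (ne_of_gt (pos q hq))] at h
    linear_combination h
  -- the key "dagger" identity
  have dag : ∀ p, 1 ≤ p →
      a (p+K+1) * ((a (p+2*K) + a (p+2*K+1)) * (a (p+4*K+1) + a (p+4*K+2)) -
          (a (p+2*K+1) + a (p+2*K+2)) * (a (p+4*K) + a (p+4*K+1))) =
      a (p+3*K+1) * ((a p + a (p+1)) * (a (p+2*K+1) + a (p+2*K+2)) -
          (a (p+1) + a (p+2)) * (a (p+2*K) + a (p+2*K+1))) := by
    intro p hp
    have h1 := hr p hp
    have h2 := hr (p+1) (by omega)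
    have h3 := hr (p+K) (by omega)
    have h4 := hr (p+K+1) (by omega)
    have h5 := hr (p+2*K) (by omega)
    have h6 := hr (p+2*K+1) (by omega)
    apply mul_left_cancel₀ (ne_of_gt (pos (p+2*K+1) (by omega)))
    linear_combination (norm := ring_nf)
      (-(a (p+3*K+1) * (a (p+2*K+1) + a (p+2*K+2)))) * h1
      + (-(a (p+3*K+1) * (a (p+2*K) + a (p+2*K+1)))) * h2
      + (-(a (p+2*K+1) + a (p+2*K+2))) * h3
      + (a (p+2*K) + a (p+2*K+1)) * h4
      + (a (p+K+1) * (a (p+2*K+1) + a (p+2*K+2))) * h5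
      + (a (p+K+1) * (a (p+2*K) + a (p+2*K+1))) * h6
  -- conservation step
  have cons : ∀ p, 1 ≤ p →
      (a (p+2*K) + a (p+2*K+1)) * ((a (p+K+1) * a (p+5*K+2) - a (p+K+2) * a (p+5*K+1)) + (a (p+1) + a (p+2)))
      = (a (p+2*K+1) + a (p+2*K+2)) * ((a (p+K) * a (p+5*K+1) - a (p+K+1) * a (p+5*K)) + (a p + a (p+1))) := by
    intro p hp
    have h1 := hr p hp
    have h3 := hr (p+K) (by omega)
    have h4 := hr (p+K+1) (by omega)
    have h7 := hr (p+3*K) (by omega)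
    have h8 := hr (p+3*K+1) (by omega)
    have hd := dag p hp
    apply mul_left_cancel₀ (ne_of_gt (mul_pos (pos (p+3*K) (by omega)) (pos (p+3*K+1) (by omega))))
    linear_combination (norm := ring_nf)
      ((a (p+2*K) + a (p+2*K+1)) * a (p+3*K) * a (p+K+1)) * h8
      + ((a (p+2*K) + a (p+2*K+1)) * a (p+3*K) * a (p+5*K+1)) * h4
      - ((a (p+2*K+1) + a (p+2*K+2)) * a (p+3*K+1) * a (p+K)) * h7
      - ((a (p+2*K+1) + a (p+2*K+2)) * a (p+3*K+1) * a (p+5*K)) * h3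
      + ((a (p+2*K) + a (p+2*K+1)) * (a (p+2*K+1) + a (p+2*K+2))) * h7
      - ((a (p+2*K+1) + a (p+2*K+2)) * (a (p+4*K) + a (p+4*K+1))) * h3
      + a (p+3*K) * hd
  -- explicit initial values
  have V2 : ∀ i, i ≤ K → a (2*K+1+i) = 2*(i:ℚ)+1 := by
    intro i
    induction i with
    | zero => intro _; rw [Nat.add_zero, hinit (2*K+1) (by omega) (by omega)]; norm_num
    | succ i ih =>
      intro hi
      have hv := ih (by omega)
      have h := hr (i+1) (by omega)
      have z1 := hinit (i+1) (by omega) (by omega)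
      have z2 := hinit (i+1+1) (by omega) (by omega)
      have z3 := hinit (i+1+K) (by omega) (by omega)
      have z4 := hinit (i+1+K+1) (by omega) (by omega)
      push_cast
      linear_combination (norm := ring_nf)
        h - a (i+1+2*K+1) * z1 + a (i+1+2*K) * z2 + hv + z3 + z4
  have V3 : ∀ t, t ≤ K → a (3*K+1+t) = 2*(K:ℚ)+1+2*(t:ℚ)*((t:ℚ)+1) := by
    intro t
    induction t with
    | zero =>
      intro _
      rw [Nat.add_zero, show 3*K+1 = 2*K+1+K from by ring, V2 K le_rfl]
      push_cast; ring
    | succ t ih =>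
      intro ht
      have hv := ih (by omega)
      have h := hr (K+t+1) (by omega)
      have z1 := hinit (K+t+1) (by omega) (by omega)
      have z2 := hinit (K+t+1+1) (by omega) (by omega)
      have z3 := V2 t (by omega)
      have z4 := V2 (t+1) (by omega)
      push_cast at z3 z4 ⊢
      linear_combination (norm := ring_nf)
        h - a (K+t+1+2*K+1) * z1 + a (K+t+1+2*K) * z2 + hv + z3 + z4
  have V5 : ∀ s, s+1 ≤ K →
      a (4*K+2+s) = (4*(s:ℚ)+6)*(K:ℚ)^2 + (12*(s:ℚ)+16)*(K:ℚ) + 2*(s:ℚ)^2+10*(s:ℚ)+9 := by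
    intro s
    induction s with
    | zero =>
      intro _
      have h := hr (2*K+1) (by omega)
      have z1 := hinit (2*K+1) (by omega) (by omega)
      have z2 := V2 1 hK
      have hmid := V3 K le_rfl
      have hx := V3 0 (by omega)
      have hy := V3 1 hK
      push_cast at z2 hx hy ⊢
      linear_combination (norm := ring_nf)
        h - a (2*K+1+2*K+1) * z1 + a (2*K+1+2*K) * z2 + 3*hmid + hx + hy
    | succ s ih =>
      intro hs
      have hv := ih (by omega)
      have h := hr (2*K+2+s) (by omega)
      have z1 := V2 (s+1) (by omega)
      have z2 := V2 (s+2) (by omega)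
      have hx := V3 (s+1) (by omega)
      have hy := V3 (s+2) (by omega)
      have hne : (2*(s:ℚ)+3) ≠ 0 := by positivity
      push_cast at z1 z2 hx hy ⊢
      apply mul_left_cancel₀ hne
      linear_combination (norm := ring_nf)
        h - a (2*K+2+s+2*K+1) * z1 + a (2*K+2+s+2*K) * z2 + (2*(s:ℚ)+5)*hv + hx + hy
  have hA51 : a (5*K+1) = 4*(K:ℚ)^3+16*(K:ℚ)^2+10*(K:ℚ)+1 := by
    have h := V5 (K-1) (by omega)
    rw [show 4*K+2+(K-1) = 5*K+1 from by omega] at h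
    rw [h, Nat.cast_sub hK]
    push_cast; ring
  have hV6 : a (5*K+2) = 4*(K:ℚ)^3+24*(K:ℚ)^2+42*(K:ℚ)+15 := by
    have h := hr (3*K+1) (by omega)
    have z1 := V3 0 (by omega)
    have z2 := V3 1 hK
    have hx := V3 K le_rfl
    have hy := V5 0 hK
    have hne : (2*(K:ℚ)+1) ≠ 0 := by positivity
    push_cast at z1 z2 hx hy
    apply mul_left_cancel₀ hne
    linear_combination (norm := ring_nf)
      h - a (3*K+1+2*K+1) * z1 + a (3*K+1+2*K) * z2 + (2*(K:ℚ)+5)*hA51 + hx + hy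
  -- the conserved quantity and its value
  obtain ⟨C, hC⟩ : ∃ C : ℚ, C = 2*(K:ℚ)^2+8*(K:ℚ)+4 := ⟨_, rfl⟩
  have II : ∀ p, 1 ≤ p →
      a (p+K) * a (p+5*K+1) - a (p+K+1) * a (p+5*K)
        = C * (a (p+2*K) + a (p+2*K+1)) - (a p + a (p+1)) := by
    intro p hp
    induction p, hp using Nat.le_induction with
    | base =>
      rw [show 1+5*K+1 = 5*K+2 from by ring, show 1+5*K = 5*K+1 from by ring,
          show 1+2*K+1 = 2*K+1+1 from by ring]
      rw [hV6, hA51, V2 1 hK, hinit (1+K+1) (by omega) (by omega),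
          hinit (1+K) (by omega) (by omega), hinit (1+2*K) (by omega) (by omega),
          hinit (1+1) (by omega) (by omega), hinit 1 (by omega) (by omega), hC]
      push_cast; ring
    | succ p hp ih =>
      have hcons := cons p hp
      have hSne : a (p+2*K) + a (p+2*K+1) ≠ 0 := by
        have := pos (p+2*K) (by omega); have := pos (p+2*K+1) (by omega); positivity
      apply mul_left_cancel₀ hSne
      linear_combination (norm := ring_nf) hcons + (a (p+2*K+1) + a (p+2*K+2)) * ih
  -- the quantity R and its vanishing
  obtain ⟨R, hRdef⟩ : ∃ R : ℕ → ℚ, ∀ j, R j = a (j+6*K) - C * a (j+4*K) + C * a (j+2*K) - a j :=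
    ⟨_, fun j => rfl⟩
  have hProp2 : ∀ q, 1 ≤ q → a (q+2*K) * R (q+1) = a (q+2*K+1) * R q := by
    intro q hq
    have hii := II (q+K) (by omega)
    have h5 := hr (q+2*K) (by omega)
    have h0 := hr q hq
    rw [hRdef, hRdef]
    linear_combination (norm := ring_nf) hii - C*h5 + h0
  have Rprop : ∀ j, 1 ≤ j → ∃ c : ℚ, 0 < c ∧ R j = c * R 1 := by
    intro j hj
    induction j, hj using Nat.le_induction with
    | base => exact ⟨1, one_pos, (one_mul _).symm⟩
    | succ j hj ih =>
      obtain ⟨c, hc, hcc⟩ := ih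
      have h2 := hProp2 j hj
      have hjne := ne_of_gt (pos (j+2*K) (by omega))
      refine ⟨a (j+2*K+1) * c / a (j+2*K), ?_, ?_⟩
      · exact div_pos (mul_pos (pos (j+2*K+1) (by omega)) hc) (pos (j+2*K) (by omega))
      · rw [div_mul_eq_mul_div, eq_div_iff hjne]
        linear_combination h2 + a (j+2*K+1) * hcc
  have hR1 : R 1 = 0 := by
    have hP1 : a (5*K+1) * R (K+2) - a (5*K+2) * R (K+1) = R 1 + R 2 := by
      have hA := hr (5*K+1) (by omega)
      have hB := hr (3*K+1) (by omega)
      have hI := II 1 (by omega)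
      rw [hRdef (K+2), hRdef (K+1), hRdef 1, hRdef 2]
      linear_combination (norm := ring_nf) hA - C * hB + hI
    have hP2 := hProp2 (K+1) (by omega)
    have h52 := hr (3*K+1) (by omega)
    have hkey : (a (4*K+1) + a (4*K+2)) * R (K+1) + a (3*K+1) * (R 1 + R 2) = 0 := by
      linear_combination (norm := ring_nf)
        (-(a (3*K+1))) * hP1 + a (5*K+1) * hP2 - R (K+1) * h52
    obtain ⟨c, hc, hcc⟩ := Rprop (K+1) (by omega)
    obtain ⟨c2, hc2, hcc2⟩ := Rprop 2 (by omega)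
    rw [hcc, hcc2] at hkey
    have hfac : ((a (4*K+1) + a (4*K+2)) * c + a (3*K+1) * (1 + c2)) * R 1 = 0 := by
      linear_combination hkey
    rcases mul_eq_zero.mp hfac with h | h
    · exfalso
      have hp1 := pos (4*K+1) (by omega)
      have hp2 := pos (4*K+2) (by omega)
      have hp3 := pos (3*K+1) (by omega)
      nlinarith [mul_pos (show (0:ℚ) < a (4*K+1) + a (4*K+2) by linarith) hc,
        mul_pos hp3 (show (0:ℚ) < 1 + c2 by linarith)]
    · exact h
  have LinRec : ∀ j, 1 ≤ j → a (j+6*K) = C * a (j+4*K) - C * a (j+2*K) + a j := by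
    intro j hj
    obtain ⟨c, _, hcc⟩ := Rprop j hj
    have : R j = 0 := by rw [hcc, hR1, mul_zero]
    rw [hRdef] at this
    linarith
  -- main integrality induction
  have main : ∀ n, 1 ≤ n → ∃ z : ℤ, a n = (z:ℚ) := by
    intro n
    induction n using Nat.strong_induction_on with
    | _ n ih =>
      intro hn
      by_cases c1 : n ≤ 2*K+1
      · exact ⟨1, by rw [hinit n hn c1]; norm_num⟩
      by_cases c2 : n ≤ 4*K+2
      · have h := hr (n-(2*K+1)) (by omega)
        rw [show n-(2*K+1)+2*K+1 = n from by omega, show n-(2*K+1)+2*K = n-1 from by omega,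
            show n-(2*K+1)+K+1 = n-K from by omega, show n-(2*K+1)+K = n-K-1 from by omega,
            show n-(2*K+1)+1 = n-2*K from by omega,
            hinit (n-(2*K+1)) (by omega) (by omega), one_mul] at h
        obtain ⟨z1, hz1⟩ := ih (n-1) (by omega) (by omega)
        obtain ⟨z2, hz2⟩ := ih (n-2*K) (by omega) (by omega)
        obtain ⟨z3, hz3⟩ := ih (n-K) (by omega) (by omega)
        obtain ⟨z4, hz4⟩ := ih (n-K-1) (by omega) (by omega)
        exact ⟨z2*z1+z4+z3, by rw [h, hz1, hz2, hz3, hz4]; push_cast; ring⟩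
      by_cases c3 : n ≤ 5*K+1
      · have hv := V5 (n-(4*K+2)) (by omega)
        rw [show 4*K+2+(n-(4*K+2)) = n from by omega] at hv
        refine ⟨(4*((n:ℤ)-(4*(K:ℤ)+2))+6)*(K:ℤ)^2 + (12*((n:ℤ)-(4*(K:ℤ)+2))+16)*(K:ℤ)
          + 2*((n:ℤ)-(4*(K:ℤ)+2))^2+10*((n:ℤ)-(4*(K:ℤ)+2))+9, ?_⟩
        rw [hv, Nat.cast_sub (show 4*K+2 ≤ n by omega)]
        push_cast; ring
      by_cases c4 : n ≤ 6*K+1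
      · have hii := II (n-(5*K+1)) (by omega)
        rw [show n-(5*K+1)+5*K+1 = n from by omega, show n-(5*K+1)+5*K = n-1 from by omega,
            show n-(5*K+1)+2*K+1 = n-3*K from by omega, show n-(5*K+1)+2*K = n-3*K-1 from by omega,
            show n-(5*K+1)+K+1 = n-4*K from by omega, show n-(5*K+1)+K = n-4*K-1 from by omega,
            show n-(5*K+1)+1 = n-5*K from by omega, show n-(5*K+1) = n-5*K-1 from by omega] at hii
        have z1 := hinit (n-4*K-1) (by omega) (by omega)
        have z2 := hinit (n-4*K) (by omega) (by omega)
        obtain ⟨zb, hb⟩ := ih (n-1) (by omega) (by omega)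
        obtain ⟨zc, hzc⟩ := ih (n-3*K-1) (by omega) (by omega)
        obtain ⟨zd, hzd⟩ := ih (n-3*K) (by omega) (by omega)
        obtain ⟨ze, hze⟩ := ih (n-5*K-1) (by omega) (by omega)
        obtain ⟨zf, hzf⟩ := ih (n-5*K) (by omega) (by omega)
        refine ⟨zb + (2*(K:ℤ)^2+8*(K:ℤ)+4)*(zc+zd) - (ze+zf), ?_⟩
        push_cast
        linear_combination (norm := ring_nf)
          hii - a n * z1 + a (n-1) * z2 + hb + C*hzc + C*hzd - hze - hzf
          + ((zc:ℚ)+(zd:ℚ))*hC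
      · have hl := LinRec (n-6*K) (by omega)
        rw [show n-6*K+6*K = n from by omega, show n-6*K+4*K = n-2*K from by omega,
            show n-6*K+2*K = n-4*K from by omega] at hl
        obtain ⟨z1, hz1⟩ := ih (n-2*K) (by omega) (by omega)
        obtain ⟨z2, hz2⟩ := ih (n-4*K) (by omega) (by omega)
        obtain ⟨z3, hz3⟩ := ih (n-6*K) (by omega) (by omega)
        refine ⟨(2*(K:ℤ)^2+8*(K:ℤ)+4)*z1 - (2*(K:ℤ)^2+8*(K:ℤ)+4)*z2 + z3, ?_⟩
        rw [hl, hz1, hz2, hz3, hC]; push_cast; ring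
  intro n hn
  obtain ⟨z, hz⟩ := main n hn
  refine ⟨z, ?_, hz⟩
  have := pos n hn
  rw [hz] at this
  exact_mod_cast this
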